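/- arXiv:2604.03884 — 3 statements merged into one kernel-verified Lean document; each statement's English description precedes it below -/
import Mathlib

section
/- Sum-of-squares identity for CHSH: Let A0, A1 be binary observables on H_A and B0, B1 binary observables on H_B (finite-dimensional complex inner product spaces), and let CHSH := A0⊗B0 + A0⊗B1 + A1⊗B0 − A1⊗B1. Define P := ((A0+A1)/√2) ⊗ I − I ⊗ B0 and Q := ((A1−A0)/√2) ⊗ I + I ⊗ B1, as linear maps on H_A ⊗ H_B. Then 2√2 · I − CHSH = (1/√2)(P† P + Q† Q), where P† denotes the adjoint of P; in particular 2√2 · I − CHSH is a positive operator. -/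
set_option maxHeartbeats 1000000
set_option synthInstance.maxHeartbeats 400000
set_option synthInstance.maxSize 2048

noncomputable section

open scoped TensorProduct
open Module

/-! ## The canonical inner product space structure on tensor products -/

section TensorInner

variable (E F : Type*) [NormedAddCommGroup E] [InnerProductSpace ℂ E] [FiniteDimensional ℂ E]
  [NormedAddCommGroup F] [InnerProductSpace ℂ F] [FiniteDimensional ℂ F]

/-- Coordinate representation of `E ⊗[ℂ] F` with respect to the tensor product of
orthonormal bases of `E` and `F`. -/
def tensorRepr : (E ⊗[ℂ] F) ≃ₗ[ℂ]
    EuclideanSpace ℂ (Fin (finrank ℂ E) × Fin (finrank ℂ F)) :=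
  (((stdOrthonormalBasis ℂ E).toBasis.tensorProduct
      (stdOrthonormalBasis ℂ F).toBasis).equivFun).trans
    (WithLp.linearEquiv 2 ℂ ((Fin (finrank ℂ E) × Fin (finrank ℂ F)) → ℂ)).symm

/-- The canonical inner product on the tensor product of two finite-dimensional complex
inner product spaces; it satisfies `⟪a ⊗ b, c ⊗ d⟫ = ⟪a, c⟫ * ⟪b, d⟫`. -/
def tensorCore : InnerProductSpace.Core ℂ (E ⊗[ℂ] F) where
  inner x y := inner ℂ (tensorRepr E F x) (tensorRepr E F y)
  conj_inner_symm x y := inner_conj_symm (𝕜 := ℂ) (tensorRepr E F x) (tensorRepr E F y)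
  re_inner_nonneg x := inner_self_nonneg (𝕜 := ℂ) (x := tensorRepr E F x)
  add_left x y z := by simp [map_add, inner_add_left]
  smul_left x y r := by simp [map_smul, inner_smul_left, mul_comm]
  definite x h := by
    have h0 : tensorRepr E F x = 0 := inner_self_eq_zero.mp h
    simpa using (LinearEquiv.map_eq_zero_iff _).mp h0

noncomputable instance tensorNormedAddCommGroup : NormedAddCommGroup (E ⊗[ℂ] F) :=
  (tensorCore E F).toNormedAddCommGroup

noncomputable instance tensorInnerProductSpace : InnerProductSpace ℂ (E ⊗[ℂ] F) :=
  InnerProductSpace.ofCore (tensorCore E F).toCore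

end TensorInner

notation "⟪" x ", " y "⟫" => (inner (𝕜 := ℂ) x y)

/-! ## Qubits, standard states and gates -/

/-- The qubit space `ℂ²`. -/
abbrev Qubit := EuclideanSpace ℂ (Fin 2)

/-- The standard basis state `|0⟩`. -/
def ket0 : Qubit := EuclideanSpace.single 0 1

/-- The standard basis state `|1⟩`. -/
def ket1 : Qubit := EuclideanSpace.single 1 1

/-- The rank-one operator `|a⟩⟨b|` on an inner product space. -/
def ketbra {H : Type*} [NormedAddCommGroup H] [InnerProductSpace ℂ H] (a b : H) :
    H →ₗ[ℂ] H where
  toFun v := (inner ℂ b v : ℂ) • a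
  map_add' u v := by simp [inner_add_right, add_smul]
  map_smul' c v := by simp [inner_smul_right, smul_smul]

/-- The projector `|0⟩⟨0|`. -/
def proj0 : Qubit →ₗ[ℂ] Qubit := ketbra ket0 ket0

/-- The projector `|1⟩⟨1|`. -/
def proj1 : Qubit →ₗ[ℂ] Qubit := ketbra ket1 ket1

/-- The Pauli operator `σ_z = |0⟩⟨0| - |1⟩⟨1|`. -/
def pauliZ : Qubit →ₗ[ℂ] Qubit := ketbra ket0 ket0 - ketbra ket1 ket1

/-- The Pauli operator `σ_x = |0⟩⟨1| + |1⟩⟨0|`. -/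
def pauliX : Qubit →ₗ[ℂ] Qubit := ketbra ket0 ket1 + ketbra ket1 ket0

/-- The Hadamard gate `H = (Z + X)/√2`. -/
def Hadamard : Qubit →ₗ[ℂ] Qubit := ((Real.sqrt 2 : ℂ))⁻¹ • (pauliZ + pauliX)

/-- The reflected Hadamard gate `H' = (Z - X)/√2`. -/
def HadamardPrime : Qubit →ₗ[ℂ] Qubit := ((Real.sqrt 2 : ℂ))⁻¹ • (pauliZ - pauliX)

/-- The rotation `R = sin(π/8)·X + cos(π/8)·Z`, satisfying `RZR† = H`, `RXR† = H'`. -/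
def Rotation : Qubit →ₗ[ℂ] Qubit :=
  (Real.sin (Real.pi / 8) : ℂ) • pauliX + (Real.cos (Real.pi / 8) : ℂ) • pauliZ

/-! ## Bell states -/

/-- The Bell state `|Φ+⟩ = (|00⟩ + |11⟩)/√2`. -/
def bellPhiPlus : Qubit ⊗[ℂ] Qubit :=
  ((Real.sqrt 2 : ℂ))⁻¹ • (ket0 ⊗ₜ[ℂ] ket0 + ket1 ⊗ₜ[ℂ] ket1)

/-- The Bell state `|Φ−⟩ = (|00⟩ − |11⟩)/√2`. -/
def bellPhiMinus : Qubit ⊗[ℂ] Qubit :=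
  ((Real.sqrt 2 : ℂ))⁻¹ • (ket0 ⊗ₜ[ℂ] ket0 - ket1 ⊗ₜ[ℂ] ket1)

/-- The Bell state `|Ψ+⟩ = (|01⟩ + |10⟩)/√2`. -/
def bellPsiPlus : Qubit ⊗[ℂ] Qubit :=
  ((Real.sqrt 2 : ℂ))⁻¹ • (ket0 ⊗ₜ[ℂ] ket1 + ket1 ⊗ₜ[ℂ] ket0)

/-- The Bell state `|Ψ−⟩ = (|01⟩ − |10⟩)/√2`. -/
def bellPsiMinus : Qubit ⊗[ℂ] Qubit :=
  ((Real.sqrt 2 : ℂ))⁻¹ • (ket0 ⊗ₜ[ℂ] ket1 - ket1 ⊗ₜ[ℂ] ket0)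

/-! ## Binary observables and CHSH strategies -/

/-- A binary observable: a symmetric (self-adjoint) involution. -/
structure IsBinaryObservable {H : Type*} [NormedAddCommGroup H] [InnerProductSpace ℂ H]
    (A : H →ₗ[ℂ] H) : Prop where
  symm : A.IsSymmetric
  sq_one : A ∘ₗ A = LinearMap.id

variable {H_A H_B : Type*}
  [NormedAddCommGroup H_A] [InnerProductSpace ℂ H_A] [FiniteDimensional ℂ H_A]
  [NormedAddCommGroup H_B] [InnerProductSpace ℂ H_B] [FiniteDimensional ℂ H_B]

/-- A CHSH strategy: a shared unit state together with two binary observables per party. -/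
structure CHSHStrategy (H_A H_B : Type*)
    [NormedAddCommGroup H_A] [InnerProductSpace ℂ H_A] [FiniteDimensional ℂ H_A]
    [NormedAddCommGroup H_B] [InnerProductSpace ℂ H_B] [FiniteDimensional ℂ H_B] where
  psi : H_A ⊗[ℂ] H_B
  psi_norm : ‖psi‖ = 1
  A0 : H_A →ₗ[ℂ] H_A
  A1 : H_A →ₗ[ℂ] H_A
  B0 : H_B →ₗ[ℂ] H_B
  B1 : H_B →ₗ[ℂ] H_B
  A0_bin : IsBinaryObservable A0
  A1_bin : IsBinaryObservable A1
  B0_bin : IsBinaryObservable B0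
  B1_bin : IsBinaryObservable B1

/-- The general CHSH operator `A0⊗B0 + A0⊗B1 + A1⊗B0 − A1⊗B1`. -/
def CHSH_op (A0 A1 : H_A →ₗ[ℂ] H_A) (B0 B1 : H_B →ₗ[ℂ] H_B) :
    H_A ⊗[ℂ] H_B →ₗ[ℂ] H_A ⊗[ℂ] H_B :=
  TensorProduct.map A0 B0 + TensorProduct.map A0 B1 +
    TensorProduct.map A1 B0 - TensorProduct.map A1 B1

/-- The CHSH bias `β(S) = Re⟨ψ, CHSH ψ⟩` of a strategy. -/
def chshBias (S : CHSHStrategy H_A H_B) : ℝ :=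
  (⟪S.psi, (CHSH_op S.A0 S.A1 S.B0 S.B1) S.psi⟫).re

/-- Alice's observable acting on the shared state. -/
def applyAlice (A : H_A →ₗ[ℂ] H_A) : H_A ⊗[ℂ] H_B →ₗ[ℂ] H_A ⊗[ℂ] H_B :=
  TensorProduct.map A LinearMap.id

/-- Bob's observable acting on the shared state. -/
def applyBob (B : H_B →ₗ[ℂ] H_B) : H_A ⊗[ℂ] H_B →ₗ[ℂ] H_A ⊗[ℂ] H_B :=
  TensorProduct.map LinearMap.id B

/-! ## The extraction circuit -/

variable {H : Type*} [NormedAddCommGroup H] [InnerProductSpace ℂ H] [FiniteDimensional ℂ H]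

/-- Ancilla embedding `v ↦ |aux⟩ ⊗ v`. -/
def embed (aux : Qubit) : H →ₗ[ℂ] (Qubit ⊗[ℂ] H) :=
  (TensorProduct.mk ℂ Qubit H) aux

/-- Controlled gate `|0⟩⟨0| ⊗ I + |1⟩⟨1| ⊗ A`. -/
def controlGate (A : H →ₗ[ℂ] H) : (Qubit ⊗[ℂ] H) →ₗ[ℂ] (Qubit ⊗[ℂ] H) :=
  TensorProduct.map proj0 (LinearMap.id : H →ₗ[ℂ] H) + TensorProduct.map proj1 A

/-- The extraction unitary `U_A = C_{A1}(H ⊗ I)C_{A0}(H ⊗ I)`. -/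
def unitaryUA (A0 A1 : H →ₗ[ℂ] H) : (Qubit ⊗[ℂ] H) →ₗ[ℂ] (Qubit ⊗[ℂ] H) :=
  (controlGate A1) ∘ₗ (TensorProduct.map Hadamard LinearMap.id) ∘ₗ
    (controlGate A0) ∘ₗ (TensorProduct.map Hadamard LinearMap.id)

/-- Alice's extractor `V_A = U_A (|0⟩ ⊗ ·)`. -/
def VA (A0 A1 : H →ₗ[ℂ] H) : H →ₗ[ℂ] (Qubit ⊗[ℂ] H) :=
  (unitaryUA A0 A1) ∘ₗ (embed ket0)

/-- Bob's rotated extraction unitary `U_B = (R ⊗ I) U_A(B0,B1) (R† ⊗ I)`. -/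
def unitaryUB (B0 B1 : H →ₗ[ℂ] H) : (Qubit ⊗[ℂ] H) →ₗ[ℂ] (Qubit ⊗[ℂ] H) :=
  (TensorProduct.map Rotation LinearMap.id) ∘ₗ (unitaryUA B0 B1) ∘ₗ
    (TensorProduct.map (LinearMap.adjoint Rotation) LinearMap.id)

/-- Bob's rotated ancilla `|aux⟩ = R|0⟩`. -/
def auxState : Qubit := Rotation ket0

/-- Bob's extractor `V_B = U_B (|aux⟩ ⊗ ·)`. -/
def VB (B0 B1 : H →ₗ[ℂ] H) : H →ₗ[ℂ] (Qubit ⊗[ℂ] H) :=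
  (unitaryUB B0 B1) ∘ₗ (embed auxState)

/-! ## Tensor regrouping -/

/-- The canonical regrouping isomorphism
`(ℂ² ⊗ H_A) ⊗ (ℂ² ⊗ H_B) ≃ (ℂ² ⊗ ℂ²) ⊗ (H_A ⊗ H_B)`. -/
def regSwap (H_A H_B : Type*)
    [NormedAddCommGroup H_A] [InnerProductSpace ℂ H_A] [FiniteDimensional ℂ H_A]
    [NormedAddCommGroup H_B] [InnerProductSpace ℂ H_B] [FiniteDimensional ℂ H_B] :
    ((Qubit ⊗[ℂ] H_A) ⊗[ℂ] (Qubit ⊗[ℂ] H_B)) ≃ₗ[ℂ]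
      ((Qubit ⊗[ℂ] Qubit) ⊗[ℂ] (H_A ⊗[ℂ] H_B)) :=
  (TensorProduct.assoc ℂ Qubit H_A (Qubit ⊗[ℂ] H_B)).trans <|
    (TensorProduct.congr (LinearEquiv.refl ℂ Qubit)
      (((TensorProduct.assoc ℂ H_A Qubit H_B).symm.trans
        (TensorProduct.congr (TensorProduct.comm ℂ H_A Qubit) (LinearEquiv.refl ℂ H_B))).trans
          (TensorProduct.assoc ℂ Qubit H_A H_B))).trans
      (TensorProduct.assoc ℂ Qubit Qubit (H_A ⊗[ℂ] H_B)).symm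

/-! ## The canonical two-qubit CHSH operator and the constants -/

/-- The canonical two-qubit CHSH operator `K = Z⊗H + Z⊗H' + X⊗H − X⊗H'`. -/
def K : (Qubit ⊗[ℂ] Qubit) →ₗ[ℂ] (Qubit ⊗[ℂ] Qubit) :=
  TensorProduct.map pauliZ Hadamard + TensorProduct.map pauliZ HadamardPrime +
    TensorProduct.map pauliX Hadamard - TensorProduct.map pauliX HadamardPrime

/-- The constant `c = 128√2` in the anticommutator bounds. -/
def cConst : ℝ := 128 * Real.sqrt 2

/-- The error function `δ(ε) = ε + 4√(cε)`. -/
def delta (ε : ℝ) : ℝ := ε + 4 * Real.sqrt (cConst * ε)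

end

section Aux

open scoped TensorProduct
open Module

variable {E F : Type*} [NormedAddCommGroup E] [InnerProductSpace ℂ E] [FiniteDimensional ℂ E]
  [NormedAddCommGroup F] [InnerProductSpace ℂ F] [FiniteDimensional ℂ F]

theorem tensor_inner_tmul (a c : E) (b d : F) :
    @inner ℂ _ (tensorInnerProductSpace E F).toInner (a ⊗ₜ[ℂ] b) (c ⊗ₜ[ℂ] d) = ⟪a, c⟫ * ⟪b, d⟫ := by
  classical
  show (inner ℂ (tensorRepr E F (a ⊗ₜ[ℂ] b)) (tensorRepr E F (c ⊗ₜ[ℂ] d)) : ℂ) = _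
  have hrepr : ∀ (x : E) (y : F) (p : Fin (finrank ℂ E) × Fin (finrank ℂ F)),
      tensorRepr E F (x ⊗ₜ[ℂ] y) p
        = ⟪(stdOrthonormalBasis ℂ E) p.1, x⟫ * ⟪(stdOrthonormalBasis ℂ F) p.2, y⟫ := by
    intro x y ⟨i, j⟩
    simp [tensorRepr, Basis.equivFun_apply, Basis.tensorProduct_repr_tmul_apply,
      OrthonormalBasis.coe_toBasis_repr_apply, OrthonormalBasis.repr_apply_apply, mul_comm]
  rw [PiLp.inner_apply]
  rw [Fintype.sum_prod_type]
  simp only [RCLike.inner_apply']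
  calc ∑ i, ∑ j, (starRingEnd ℂ) (tensorRepr E F (a ⊗ₜ[ℂ] b) (i, j))
          * tensorRepr E F (c ⊗ₜ[ℂ] d) (i, j)
      = ∑ i, ∑ j, (⟪a, (stdOrthonormalBasis ℂ E) i⟫ * ⟪(stdOrthonormalBasis ℂ E) i, c⟫)
          * (⟪b, (stdOrthonormalBasis ℂ F) j⟫ * ⟪(stdOrthonormalBasis ℂ F) j, d⟫) := by
        refine Finset.sum_congr rfl fun i _ => Finset.sum_congr rfl fun j _ => ?_
        rw [hrepr, hrepr]
        simp only [map_mul, inner_conj_symm]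
        ring
    _ = (∑ i, ⟪a, (stdOrthonormalBasis ℂ E) i⟫ * ⟪(stdOrthonormalBasis ℂ E) i, c⟫)
          * (∑ j, ⟪b, (stdOrthonormalBasis ℂ F) j⟫ * ⟪(stdOrthonormalBasis ℂ F) j, d⟫) := by
        rw [Finset.sum_mul_sum]
    _ = ⟪a, c⟫ * ⟪b, d⟫ := by
        rw [OrthonormalBasis.sum_inner_mul_inner, OrthonormalBasis.sum_inner_mul_inner]

theorem tensor_inner_bridge (x y : E ⊗[ℂ] F) :
    ⟪x, y⟫ = @inner ℂ _ (tensorInnerProductSpace E F).toInner x y := by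
  induction x using TensorProduct.induction_on with
  | zero => rw [TensorProduct.inner_def, map_zero, LinearMap.zero_apply, inner_zero_left]
  | tmul a b =>
    induction y using TensorProduct.induction_on with
    | zero => rw [TensorProduct.inner_def, map_zero, inner_zero_right]
    | tmul c d => rw [TensorProduct.inner_tmul, tensor_inner_tmul]
    | add y1 y2 h1 h2 =>
      rw [TensorProduct.inner_def, map_add, ← TensorProduct.inner_def,
        ← TensorProduct.inner_def, h1, h2, inner_add_right]
  | add x1 x2 h1 h2 =>
    rw [TensorProduct.inner_def, map_add, LinearMap.add_apply, ← TensorProduct.inner_def,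
      ← TensorProduct.inner_def, h1, h2, inner_add_left]

theorem tensor_map_isSymmetric {A : E →ₗ[ℂ] E} {B : F →ₗ[ℂ] F}
    (hA : A.IsSymmetric) (hB : B.IsSymmetric) :
    (TensorProduct.map A B).IsSymmetric := by
  intro x y
  induction x using TensorProduct.induction_on with
  | zero => simp
  | tmul a b =>
    induction y using TensorProduct.induction_on with
    | zero => simp
    | tmul c d => simp [TensorProduct.map_tmul, tensor_inner_tmul, hA a c, hB b d]
    | add y1 y2 h1 h2 => simp only [map_add, inner_add_right, h1, h2]
  | add x1 x2 h1 h2 => simp only [map_add, inner_add_left, h1, h2]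

end Aux

open scoped TensorProduct
open Module

/-- **Sum-of-squares identity for CHSH.** -/
theorem chsh_sos_identity
    {H_A H_B : Type*}
    [NormedAddCommGroup H_A] [InnerProductSpace ℂ H_A] [FiniteDimensional ℂ H_A]
    [NormedAddCommGroup H_B] [InnerProductSpace ℂ H_B] [FiniteDimensional ℂ H_B]
    (A0 A1 : H_A →ₗ[ℂ] H_A) (B0 B1 : H_B →ₗ[ℂ] H_B)
    (hA0 : IsBinaryObservable A0) (hA1 : IsBinaryObservable A1)
    (hB0 : IsBinaryObservable B0) (hB1 : IsBinaryObservable B1) :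
    letI CHSH := CHSH_op A0 A1 B0 B1
    letI P := TensorProduct.map (((Real.sqrt 2 : ℂ))⁻¹ • (A0 + A1))
        (LinearMap.id : H_B →ₗ[ℂ] H_B)
      - TensorProduct.map (LinearMap.id : H_A →ₗ[ℂ] H_A) B0
    letI Q := TensorProduct.map (((Real.sqrt 2 : ℂ))⁻¹ • (A1 - A0))
        (LinearMap.id : H_B →ₗ[ℂ] H_B)
      + TensorProduct.map (LinearMap.id : H_A →ₗ[ℂ] H_A) B1
    (((2 * Real.sqrt 2 : ℝ) : ℂ) •
        (LinearMap.id : H_A ⊗[ℂ] H_B →ₗ[ℂ] H_A ⊗[ℂ] H_B) - CHSH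
      = ((Real.sqrt 2 : ℂ))⁻¹ •
          (LinearMap.adjoint P ∘ₗ P + LinearMap.adjoint Q ∘ₗ Q))
    ∧ ∀ v : H_A ⊗[ℂ] H_B,
        0 ≤ (⟪v, ((((2 * Real.sqrt 2 : ℝ) : ℂ) •
          (LinearMap.id : H_A ⊗[ℂ] H_B →ₗ[ℂ] H_A ⊗[ℂ] H_B) - CHSH)) v⟫).re := by
  have s2 : (Real.sqrt 2 : ℂ) * (Real.sqrt 2 : ℂ) = 2 := by
    rw [← Complex.ofReal_mul, Real.mul_self_sqrt (by norm_num)]; norm_num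
  have s2ne : (Real.sqrt 2 : ℂ) ≠ 0 := by
    intro h
    rw [h, mul_zero] at s2
    norm_num at s2
  have hA0i : ∀ x, A0 (A0 x) = x := fun x => DFunLike.congr_fun hA0.sq_one x
  have hA1i : ∀ x, A1 (A1 x) = x := fun x => DFunLike.congr_fun hA1.sq_one x
  have hB0i : ∀ x, B0 (B0 x) = x := fun x => DFunLike.congr_fun hB0.sq_one x
  have hB1i : ∀ x, B1 (B1 x) = x := fun x => DFunLike.congr_fun hB1.sq_one x
  have hidA : (LinearMap.id : H_A →ₗ[ℂ] H_A).IsSymmetric := fun _ _ => rfl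
  have hidB : (LinearMap.id : H_B →ₗ[ℂ] H_B).IsSymmetric := fun _ _ => rfl
  have hS : (((Real.sqrt 2 : ℂ))⁻¹ • (A0 + A1)).IsSymmetric := by
    intro x y
    simp only [LinearMap.smul_apply, LinearMap.add_apply, inner_smul_left, inner_smul_right,
      inner_add_left, inner_add_right, hA0.symm x y, hA1.symm x y, map_inv₀,
      Complex.conj_ofReal]
  have hT : (((Real.sqrt 2 : ℂ))⁻¹ • (A1 - A0)).IsSymmetric := by
    intro x y
    simp only [LinearMap.smul_apply, LinearMap.sub_apply, inner_smul_left, inner_smul_right,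
      inner_sub_left, inner_sub_right, hA0.symm x y, hA1.symm x y, map_inv₀,
      Complex.conj_ofReal]
  have hP : (TensorProduct.map (((Real.sqrt 2 : ℂ))⁻¹ • (A0 + A1))
        (LinearMap.id : H_B →ₗ[ℂ] H_B)
      - TensorProduct.map (LinearMap.id : H_A →ₗ[ℂ] H_A) B0).IsSymmetric := by
    intro x y
    simp only [LinearMap.sub_apply, inner_sub_left, inner_sub_right,
      tensor_map_isSymmetric hS hidB x y, tensor_map_isSymmetric hidA hB0.symm x y]
  have hQ : (TensorProduct.map (((Real.sqrt 2 : ℂ))⁻¹ • (A1 - A0))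
        (LinearMap.id : H_B →ₗ[ℂ] H_B)
      + TensorProduct.map (LinearMap.id : H_A →ₗ[ℂ] H_A) B1).IsSymmetric := by
    intro x y
    simp only [LinearMap.add_apply, inner_add_left, inner_add_right,
      tensor_map_isSymmetric hT hidB x y, tensor_map_isSymmetric hidA hB1.symm x y]
  have hPadj := LinearMap.isSelfAdjoint_iff'.mp ((LinearMap.isSymmetric_iff_isSelfAdjoint _).mp hP)
  have hQadj := LinearMap.isSelfAdjoint_iff'.mp ((LinearMap.isSymmetric_iff_isSelfAdjoint _).mp hQ)
  have hmain : ((2 * Real.sqrt 2 : ℝ) : ℂ) •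
        (LinearMap.id : H_A ⊗[ℂ] H_B →ₗ[ℂ] H_A ⊗[ℂ] H_B) - CHSH_op A0 A1 B0 B1
      = ((Real.sqrt 2 : ℂ))⁻¹ •
          (LinearMap.adjoint (TensorProduct.map (((Real.sqrt 2 : ℂ))⁻¹ • (A0 + A1))
              (LinearMap.id : H_B →ₗ[ℂ] H_B)
            - TensorProduct.map (LinearMap.id : H_A →ₗ[ℂ] H_A) B0) ∘ₗ
              (TensorProduct.map (((Real.sqrt 2 : ℂ))⁻¹ • (A0 + A1))
              (LinearMap.id : H_B →ₗ[ℂ] H_B)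
            - TensorProduct.map (LinearMap.id : H_A →ₗ[ℂ] H_A) B0)
          + LinearMap.adjoint (TensorProduct.map (((Real.sqrt 2 : ℂ))⁻¹ • (A1 - A0))
              (LinearMap.id : H_B →ₗ[ℂ] H_B)
            + TensorProduct.map (LinearMap.id : H_A →ₗ[ℂ] H_A) B1) ∘ₗ
              (TensorProduct.map (((Real.sqrt 2 : ℂ))⁻¹ • (A1 - A0))
              (LinearMap.id : H_B →ₗ[ℂ] H_B)
            + TensorProduct.map (LinearMap.id : H_A →ₗ[ℂ] H_A) B1)) := by
    rw [hPadj, hQadj]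
    apply TensorProduct.ext'
    intro a b
    simp only [CHSH_op, LinearMap.sub_apply, LinearMap.add_apply, LinearMap.smul_apply,
      LinearMap.comp_apply, LinearMap.id_apply, TensorProduct.map_tmul, map_add, map_sub,
      map_smul, TensorProduct.tmul_add, TensorProduct.add_tmul, TensorProduct.sub_tmul,
      TensorProduct.tmul_sub, ← TensorProduct.smul_tmul', TensorProduct.tmul_smul,
      hA0i, hA1i, hB0i, hB1i, smul_smul]
    have h2 : (Real.sqrt 2 : ℂ) ^ 2 = 2 := by rw [sq]; exact s2
    have h3 : (Real.sqrt 2 : ℂ) ^ 3 = 2 * (Real.sqrt 2 : ℂ) := by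
      rw [pow_succ, h2]
    have h4 : (Real.sqrt 2 : ℂ) ^ 4 = 4 := by
      rw [show (4:ℕ) = 2*2 from rfl, pow_mul, h2]; norm_num
    match_scalars
    all_goals field_simp
    all_goals ring_nf
    all_goals simp only [h2, h3, h4]
    all_goals norm_num
  refine ⟨hmain, fun v => ?_⟩
  rw [hmain]
  rw [tensor_inner_bridge]
  rw [LinearMap.smul_apply, inner_smul_right, LinearMap.add_apply, inner_add_right,
    LinearMap.comp_apply, LinearMap.comp_apply, LinearMap.adjoint_inner_right,
    LinearMap.adjoint_inner_right]
  rw [show (((Real.sqrt 2 : ℂ))⁻¹ : ℂ) = ((Real.sqrt 2)⁻¹ : ℝ) by push_cast; ring]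
  rw [Complex.re_ofReal_mul, Complex.add_re]
  have h1 := inner_self_nonneg (𝕜 := ℂ)
    (x := (TensorProduct.map (((((Real.sqrt 2)⁻¹ : ℝ)) : ℂ) • (A0 + A1))
        (LinearMap.id : H_B →ₗ[ℂ] H_B)
      - TensorProduct.map (LinearMap.id : H_A →ₗ[ℂ] H_A) B0) v)
  have h2' := inner_self_nonneg (𝕜 := ℂ)
    (x := (TensorProduct.map (((((Real.sqrt 2)⁻¹ : ℝ)) : ℂ) • (A1 - A0))
        (LinearMap.id : H_B →ₗ[ℂ] H_B)
      + TensorProduct.map (LinearMap.id : H_A →ₗ[ℂ] H_A) B1) v)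
  have h3' : (0:ℝ) ≤ (Real.sqrt 2)⁻¹ := by positivity
  exact mul_nonneg h3' (add_nonneg h1 h2')
end

section
/- Alice anticommutator bound: Let S = (ψ, A0, A1, B0, B1) be a CHSH strategy on finite-dimensional complex inner product spaces H_A, H_B, let ε ≥ 0, and suppose the bias satisfies β(S) ≥ 2√2 − ε. Then Re⟨ψ, ((A0A1 + A1A0)² ⊗ I) ψ⟩ ≤ c·ε, where c := 128√2. -/
set_option maxHeartbeats 1000000
set_option synthInstance.maxHeartbeats 400000
set_option synthInstance.maxSize 2048

open scoped TensorProduct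
open Module

attribute [-instance] tensorNormedAddCommGroup tensorInnerProductSpace

noncomputable section AuxLemmas

open scoped TensorProduct
open Module

set_option linter.unusedSectionVars false

variable {E F : Type*} [NormedAddCommGroup E] [InnerProductSpace ℂ E] [FiniteDimensional ℂ E]
  [NormedAddCommGroup F] [InnerProductSpace ℂ F] [FiniteDimensional ℂ F]

lemma aux_repr_inner_tmul (a c : E) (b d : F) :
    inner (𝕜 := ℂ) (tensorRepr E F (a ⊗ₜ[ℂ] b)) (tensorRepr E F (c ⊗ₜ[ℂ] d))
      = ⟪a, c⟫ * ⟪b, d⟫ := by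
  have hA : ⟪a, c⟫ = inner (𝕜 := ℂ) ((stdOrthonormalBasis ℂ E).repr a)
      ((stdOrthonormalBasis ℂ E).repr c) := by
    rw [(stdOrthonormalBasis ℂ E).repr.inner_map_map]
  have hB : ⟪b, d⟫ = inner (𝕜 := ℂ) ((stdOrthonormalBasis ℂ F).repr b)
      ((stdOrthonormalBasis ℂ F).repr d) := by
    rw [(stdOrthonormalBasis ℂ F).repr.inner_map_map]
  rw [hA, hB]
  simp only [PiLp.inner_apply, RCLike.inner_apply]
  rw [Finset.sum_mul_sum]
  rw [← Finset.sum_product']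
  apply Finset.sum_congr rfl
  rintro ⟨i, j⟩ _
  have h1 : (tensorRepr E F) (a ⊗ₜ[ℂ] b) (i, j)
      = (stdOrthonormalBasis ℂ E).toBasis.repr a i
        * (stdOrthonormalBasis ℂ F).toBasis.repr b j := by
    simp [tensorRepr, Basis.equivFun_apply, Basis.tensorProduct_repr_tmul_apply]
    ring
  have h2 : (tensorRepr E F) (c ⊗ₜ[ℂ] d) (i, j)
      = (stdOrthonormalBasis ℂ E).toBasis.repr c i
        * (stdOrthonormalBasis ℂ F).toBasis.repr d j := by
    simp [tensorRepr, Basis.equivFun_apply, Basis.tensorProduct_repr_tmul_apply]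
    ring
  rw [h1, h2]
  simp [OrthonormalBasis.coe_toBasis_repr_apply]
  ring

lemma aux_inner_tmul (a c : E) (b d : F) :
    ⟪a ⊗ₜ[ℂ] b, c ⊗ₜ[ℂ] d⟫ = ⟪a, c⟫ * ⟪b, d⟫ :=
  by simp only [TensorProduct.inner_tmul]

lemma aux_repr_inner (x y : E ⊗[ℂ] F) :
    inner (𝕜 := ℂ) (tensorRepr E F x) (tensorRepr E F y) = ⟪x, y⟫ := by
  induction x using TensorProduct.induction_on with
  | zero => simp
  | tmul a b =>
    induction y using TensorProduct.induction_on with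
    | zero => simp
    | tmul c d => rw [aux_repr_inner_tmul, aux_inner_tmul]
    | add y1 y2 h1 h2 => simp only [map_add, inner_add_right, h1, h2]
  | add x1 x2 h1 h2 => simp only [map_add, inner_add_left, h1, h2]

lemma aux_norm_eq (x : E ⊗[ℂ] F) :
    @Norm.norm _ (tensorNormedAddCommGroup E F).toNorm x = ‖x‖ := by
  rw [norm_eq_sqrt_re_inner (𝕜 := ℂ) x]
  change √(RCLike.re (inner ℂ (tensorRepr E F x) (tensorRepr E F x))) = _
  rw [aux_repr_inner]

lemma aux_map_inner {A A' : E →ₗ[ℂ] E} {B B' : F →ₗ[ℂ] F}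
    (hA : ∀ a c, ⟪A' a, c⟫ = ⟪a, A c⟫) (hB : ∀ b d, ⟪B' b, d⟫ = ⟪b, B d⟫)
    (x y : E ⊗[ℂ] F) :
    ⟪TensorProduct.map A' B' x, y⟫ = ⟪x, TensorProduct.map A B y⟫ := by
  induction x using TensorProduct.induction_on with
  | zero => simp
  | tmul a b =>
    induction y using TensorProduct.induction_on with
    | zero => simp
    | tmul c d => simp [TensorProduct.map_tmul, aux_inner_tmul, hA, hB]
    | add y1 y2 h1 h2 =>
      simp only [TensorProduct.map_tmul] at h1 h2
      simp [map_add, inner_add_right, h1, h2]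
  | add x1 x2 h1 h2 => simp [map_add, inner_add_left, h1, h2]

lemma aux_map_sub_left (f f' : E →ₗ[ℂ] E) (g : F →ₗ[ℂ] F) :
    TensorProduct.map (f - f') g = TensorProduct.map f g - TensorProduct.map f' g :=
  TensorProduct.ext' fun a b => by
    simp [TensorProduct.map_tmul, TensorProduct.sub_tmul]

lemma aux_map_sub_right (f : E →ₗ[ℂ] E) (g g' : F →ₗ[ℂ] F) :
    TensorProduct.map f (g - g') = TensorProduct.map f g - TensorProduct.map f g' :=
  TensorProduct.ext' fun a b => by
    simp [TensorProduct.map_tmul, TensorProduct.tmul_sub]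

lemma aux_map_neg_left (f : E →ₗ[ℂ] E) (g : F →ₗ[ℂ] F) :
    TensorProduct.map (-f) g = - TensorProduct.map f g :=
  TensorProduct.ext' fun a b => by
    simp [TensorProduct.map_tmul, TensorProduct.neg_tmul]

/-- Norm is preserved by `id ⊗ M` for "unitary" `M`. -/
lemma aux_norm_map_right (M M' : F →ₗ[ℂ] F)
    (h : ∀ b d, ⟪M b, d⟫ = ⟪b, M' d⟫) (hMM : M' ∘ₗ M = LinearMap.id)
    (x : E ⊗[ℂ] F) :
    ‖TensorProduct.map (LinearMap.id : E →ₗ[ℂ] E) M x‖ = ‖x‖ := by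
  have key : ⟪TensorProduct.map (LinearMap.id : E →ₗ[ℂ] E) M x,
      TensorProduct.map (LinearMap.id : E →ₗ[ℂ] E) M x⟫ = ⟪x, x⟫ := by
    rw [aux_map_inner (A := LinearMap.id) (B := M')
      (fun a c => rfl) h]
    rw [show TensorProduct.map (LinearMap.id : E →ₗ[ℂ] E) M'
        (TensorProduct.map LinearMap.id M x)
        = TensorProduct.map ((LinearMap.id : E →ₗ[ℂ] E) ∘ₗ LinearMap.id) (M' ∘ₗ M) x by
      rw [TensorProduct.map_comp]; rfl]
    simp [hMM]
  have h1 : ‖TensorProduct.map (LinearMap.id : E →ₗ[ℂ] E) M x‖ ^ 2 = ‖x‖ ^ 2 := by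
    rw [← inner_self_eq_norm_sq (𝕜 := ℂ), ← inner_self_eq_norm_sq (𝕜 := ℂ), key]
  have h2 := congrArg Real.sqrt h1
  rwa [Real.sqrt_sq (norm_nonneg _), Real.sqrt_sq (norm_nonneg _)] at h2

lemma aux_invol_anticomm_sq {A0 A1 : E →ₗ[ℂ] E}
    (h0 : A0 ∘ₗ A0 = LinearMap.id) (h1 : A1 ∘ₗ A1 = LinearMap.id) :
    (A0 ∘ₗ A1 + A1 ∘ₗ A0) ∘ₗ (A0 ∘ₗ A1 + A1 ∘ₗ A0)
      = (A0 ∘ₗ A1 - A1 ∘ₗ A0) ∘ₗ (A0 ∘ₗ A1 - A1 ∘ₗ A0)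
        + (LinearMap.id + LinearMap.id + LinearMap.id + LinearMap.id) := by
  have e1 : (A0 ∘ₗ A1) ∘ₗ (A1 ∘ₗ A0) = LinearMap.id := by
    calc (A0 ∘ₗ A1) ∘ₗ (A1 ∘ₗ A0) = A0 ∘ₗ ((A1 ∘ₗ A1) ∘ₗ A0) := by
          simp only [LinearMap.comp_assoc]
    _ = LinearMap.id := by rw [h1, LinearMap.id_comp, h0]
  have e2 : (A1 ∘ₗ A0) ∘ₗ (A0 ∘ₗ A1) = LinearMap.id := by
    calc (A1 ∘ₗ A0) ∘ₗ (A0 ∘ₗ A1) = A1 ∘ₗ ((A0 ∘ₗ A0) ∘ₗ A1) := by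
          simp only [LinearMap.comp_assoc]
    _ = LinearMap.id := by rw [h0, LinearMap.id_comp, h1]
  simp only [LinearMap.add_comp, LinearMap.comp_add, LinearMap.sub_comp, LinearMap.comp_sub,
    e1, e2]
  abel

lemma aux_chsh_sq {A0 A1 : E →ₗ[ℂ] E} {B0 B1 : F →ₗ[ℂ] F}
    (hA0 : A0 ∘ₗ A0 = LinearMap.id) (hA1 : A1 ∘ₗ A1 = LinearMap.id)
    (hB0 : B0 ∘ₗ B0 = LinearMap.id) (hB1 : B1 ∘ₗ B1 = LinearMap.id) :
    CHSH_op A0 A1 B0 B1 ∘ₗ CHSH_op A0 A1 B0 B1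
      = (LinearMap.id + LinearMap.id + LinearMap.id + LinearMap.id)
        - TensorProduct.map (A0 ∘ₗ A1 - A1 ∘ₗ A0) (B0 ∘ₗ B1 - B1 ∘ₗ B0) := by
  simp only [CHSH_op, aux_map_sub_left, aux_map_sub_right,
    LinearMap.add_comp, LinearMap.comp_add, LinearMap.sub_comp, LinearMap.comp_sub,
    ← TensorProduct.map_comp, hA0, hA1, hB0, hB1, TensorProduct.map_id]
  abel


lemma aux_numeric (s n N r ε : ℝ) (hs0 : 0 ≤ s) (hs2 : s ^ 2 = 2)
    (hε : 0 ≤ ε) (hn0 : 0 ≤ n) (hb : 2 * s - ε ≤ N) (hNsq : N ^ 2 = 4 + r)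
    (hr : r ≤ 2 * n) : 4 - n ^ 2 ≤ 128 * s * ε := by
  have hs1 : 1 ≤ s := by nlinarith [sq_nonneg (s - 1), sq_nonneg (s + 1)]
  have hsu : s ≤ 3 / 2 := by nlinarith [sq_nonneg (s - 1)]
  by_cases hcase : ε ≤ 1 / 8
  · have hb0' : (0:ℝ) ≤ 2 * s - ε := by linarith
    have hbsq : (2 * s - ε) ^ 2 ≤ N ^ 2 := by
      have hN0 : 0 ≤ N := le_trans hb0' hb
      nlinarith
    have h2n : 2 - 2 * (s * ε) ≤ n := by nlinarith [sq_nonneg ε]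
    have hse : s * ε ≤ (3 / 2) * (1 / 8) :=
      mul_le_mul hsu hcase hε (by norm_num)
    have h2n0 : (0:ℝ) ≤ 2 - 2 * (s * ε) := by linarith
    have hnsq : (2 - 2 * (s * ε)) ^ 2 ≤ n ^ 2 := by nlinarith
    nlinarith [mul_nonneg hs0 hε, sq_nonneg (s * ε)]
  · push_neg at hcase
    have hss : (1:ℝ) * (1 / 8) ≤ s * ε := mul_le_mul hs1 hcase.le (by norm_num) hs0
    nlinarith [sq_nonneg n]

lemma aux_comp_cancel {A0 A1 : E →ₗ[ℂ] E}
    (h0 : A0 ∘ₗ A0 = LinearMap.id) (h1 : A1 ∘ₗ A1 = LinearMap.id) :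
    (A0 ∘ₗ A1) ∘ₗ (A1 ∘ₗ A0) = LinearMap.id := by
  calc (A0 ∘ₗ A1) ∘ₗ (A1 ∘ₗ A0) = A0 ∘ₗ ((A1 ∘ₗ A1) ∘ₗ A0) := by
        simp only [LinearMap.comp_assoc]
  _ = LinearMap.id := by rw [h1, LinearMap.id_comp, h0]

end AuxLemmas

/-- **Alice anticommutator bound.** -/
theorem alice_anticommutator_bound
    {H_A H_B : Type*}
    [NormedAddCommGroup H_A] [InnerProductSpace ℂ H_A] [FiniteDimensional ℂ H_A]
    [NormedAddCommGroup H_B] [InnerProductSpace ℂ H_B] [FiniteDimensional ℂ H_B]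
    (S : CHSHStrategy H_A H_B) (ε : ℝ) (hε : 0 ≤ ε)
    (hBias : chshBias S ≥ 2 * Real.sqrt 2 - ε) :
    (⟪S.psi, (TensorProduct.map
        ((S.A0 ∘ₗ S.A1 + S.A1 ∘ₗ S.A0) ∘ₗ (S.A0 ∘ₗ S.A1 + S.A1 ∘ₗ S.A0))
        (LinearMap.id : H_B →ₗ[ℂ] H_B)) S.psi⟫).re ≤ cConst * ε := by
  classical
  have h0 : ∀ x y, ⟪S.A0 x, y⟫ = ⟪x, S.A0 y⟫ := S.A0_bin.symm
  have h1 : ∀ x y, ⟪S.A1 x, y⟫ = ⟪x, S.A1 y⟫ := S.A1_bin.symm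
  have hb0 : ∀ x y, ⟪S.B0 x, y⟫ = ⟪x, S.B0 y⟫ := S.B0_bin.symm
  have hb1 : ∀ x y, ⟪S.B1 x, y⟫ = ⟪x, S.B1 y⟫ := S.B1_bin.symm
  have hA0i := S.A0_bin.sq_one
  have hA1i := S.A1_bin.sq_one
  have hB0i := S.B0_bin.sq_one
  have hB1i := S.B1_bin.sq_one
  set ψ := S.psi with hψdef
  set G : H_A →ₗ[ℂ] H_A := S.A0 ∘ₗ S.A1 - S.A1 ∘ₗ S.A0 with hGdef
  set Hc : H_B →ₗ[ℂ] H_B := S.B0 ∘ₗ S.B1 - S.B1 ∘ₗ S.B0 with hHcdef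
  set C := CHSH_op S.A0 S.A1 S.B0 S.B1 with hCdef
  set u := TensorProduct.map G (LinearMap.id : H_B →ₗ[ℂ] H_B) ψ with hudef
  set w := TensorProduct.map (LinearMap.id : H_A →ₗ[ℂ] H_A) Hc ψ with hwdef
  have hGadj : ∀ a c, ⟪(-G) a, c⟫ = ⟪a, G c⟫ := by
    intro a c
    simp only [hGdef, LinearMap.neg_apply, LinearMap.sub_apply, LinearMap.comp_apply,
      inner_neg_left, inner_sub_left, inner_sub_right, h0, h1]
    ring
  -- the CHSH operator is symmetric
  have hCsym : ∀ x y : H_A ⊗[ℂ] H_B, ⟪C x, y⟫ = ⟪x, C y⟫ := by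
    intro x y
    simp only [hCdef, CHSH_op, LinearMap.add_apply, LinearMap.sub_apply,
      inner_add_left, inner_add_right, inner_sub_left, inner_sub_right,
      aux_map_inner h0 hb0 x y, aux_map_inner h0 hb1 x y, aux_map_inner h1 hb0 x y,
      aux_map_inner h1 hb1 x y]
  -- map G Hc ψ = map G id w
  have e2 : TensorProduct.map G Hc ψ = TensorProduct.map G LinearMap.id w := by
    rw [hwdef, ← LinearMap.comp_apply, ← TensorProduct.map_comp, LinearMap.comp_id,
      LinearMap.id_comp]
  -- moving G to the left gives a minus sign
  have e3 : ∀ z, ⟪ψ, TensorProduct.map G (LinearMap.id : H_B →ₗ[ℂ] H_B) z⟫ = - ⟪u, z⟫ := by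
    intro z
    rw [← aux_map_inner (B := (LinearMap.id : H_B →ₗ[ℂ] H_B)) (B' := (LinearMap.id : H_B →ₗ[ℂ] H_B)) hGadj (fun b d => rfl) ψ z, aux_map_neg_left, LinearMap.neg_apply,
      inner_neg_left, hudef]
  -- norm squared of Cψ
  have hCCψ : ⟪C ψ, C ψ⟫ = 4 * ⟪ψ, ψ⟫ + ⟪u, w⟫ := by
    rw [hCsym ψ (C ψ)]
    have e : C (C ψ) = (ψ + ψ + ψ + ψ) - TensorProduct.map G Hc ψ := by
      have hh := congrArg (fun (T : H_A ⊗[ℂ] H_B →ₗ[ℂ] H_A ⊗[ℂ] H_B) => T ψ)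
        (aux_chsh_sq hA0i hA1i hB0i hB1i)
      simpa [hCdef, hGdef, hHcdef] using hh
    rw [e, e2, inner_sub_right, e3 w]
    simp only [inner_add_right]
    ring
  have hψ1 : ‖ψ‖ = 1 := (aux_norm_eq ψ).symm.trans S.psi_norm
  have hNsq : ‖C ψ‖ ^ 2 = 4 + (⟪u, w⟫).re := by
    have := inner_self_eq_norm_sq (𝕜 := ℂ) (C ψ)
    rw [RCLike.re_to_complex] at this
    rw [← this, hCCψ]
    have hψψ : ⟪ψ, ψ⟫ = 1 := by
      exact (inner_self_eq_norm_sq_to_K (𝕜 := ℂ) ψ).trans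
        (by rw [hψ1]; simp : ((‖ψ‖ : ℂ)) ^ 2 = 1)
    simp [hψψ]
  -- bias lower-bounds the norm of Cψ
  have hbias' : 2 * Real.sqrt 2 - ε ≤ (⟪ψ, C ψ⟫).re := hBias
  have hreN : (⟪ψ, C ψ⟫).re ≤ ‖C ψ‖ := by
    have := re_inner_le_norm (𝕜 := ℂ) ψ (C ψ)
    rw [RCLike.re_to_complex, hψ1, one_mul] at this
    exact this
  have hb : 2 * Real.sqrt 2 - ε ≤ ‖C ψ‖ := le_trans hbias' hreN
  -- norm of w is at most 2
  have hwle : ‖w‖ ≤ 2 := by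
    have hsplit : w = TensorProduct.map (LinearMap.id : H_A →ₗ[ℂ] H_A) (S.B0 ∘ₗ S.B1) ψ
        - TensorProduct.map (LinearMap.id : H_A →ₗ[ℂ] H_A) (S.B1 ∘ₗ S.B0) ψ := by
      rw [hwdef, hHcdef, aux_map_sub_right, LinearMap.sub_apply]
    have hw1 : ‖TensorProduct.map (LinearMap.id : H_A →ₗ[ℂ] H_A) (S.B0 ∘ₗ S.B1) ψ‖ = 1 := by
      rw [aux_norm_map_right (S.B0 ∘ₗ S.B1) (S.B1 ∘ₗ S.B0)
        (fun b d => by simp only [LinearMap.comp_apply]; rw [hb0, hb1])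
        (aux_comp_cancel hB1i hB0i) ψ, hψ1]
    have hw2 : ‖TensorProduct.map (LinearMap.id : H_A →ₗ[ℂ] H_A) (S.B1 ∘ₗ S.B0) ψ‖ = 1 := by
      rw [aux_norm_map_right (S.B1 ∘ₗ S.B0) (S.B0 ∘ₗ S.B1)
        (fun b d => by simp only [LinearMap.comp_apply]; rw [hb1, hb0])
        (aux_comp_cancel hB0i hB1i) ψ, hψ1]
    calc ‖w‖ ≤ ‖TensorProduct.map (LinearMap.id : H_A →ₗ[ℂ] H_A) (S.B0 ∘ₗ S.B1) ψ‖
        + ‖TensorProduct.map (LinearMap.id : H_A →ₗ[ℂ] H_A) (S.B1 ∘ₗ S.B0) ψ‖ := by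
          rw [hsplit]; exact norm_sub_le _ _
    _ = 2 := by rw [hw1, hw2]; norm_num
  have hruw : (⟪u, w⟫).re ≤ 2 * ‖u‖ := by
    have h := re_inner_le_norm (𝕜 := ℂ) u w
    rw [RCLike.re_to_complex] at h
    have : ‖u‖ * ‖w‖ ≤ ‖u‖ * 2 := mul_le_mul_of_nonneg_left hwle (norm_nonneg u)
    linarith
  -- the target equals 4 - ‖u‖²
  have hT : (⟪ψ, (TensorProduct.map
      ((S.A0 ∘ₗ S.A1 + S.A1 ∘ₗ S.A0) ∘ₗ (S.A0 ∘ₗ S.A1 + S.A1 ∘ₗ S.A0))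
      (LinearMap.id : H_B →ₗ[ℂ] H_B)) ψ⟫).re = 4 - ‖u‖ ^ 2 := by
    rw [aux_invol_anticomm_sq hA0i hA1i]
    have hmap : TensorProduct.map ((S.A0 ∘ₗ S.A1 - S.A1 ∘ₗ S.A0) ∘ₗ (S.A0 ∘ₗ S.A1 - S.A1 ∘ₗ S.A0)
          + (LinearMap.id + LinearMap.id + LinearMap.id + LinearMap.id))
          (LinearMap.id : H_B →ₗ[ℂ] H_B) ψ
        = TensorProduct.map G LinearMap.id u + (ψ + ψ + ψ + ψ) := by
      rw [TensorProduct.map_add_left, TensorProduct.map_add_left, TensorProduct.map_add_left,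
        TensorProduct.map_add_left]
      have hGG : TensorProduct.map ((S.A0 ∘ₗ S.A1 - S.A1 ∘ₗ S.A0) ∘ₗ (S.A0 ∘ₗ S.A1 - S.A1 ∘ₗ S.A0))
          (LinearMap.id : H_B →ₗ[ℂ] H_B) ψ = TensorProduct.map G LinearMap.id u := by
        rw [hudef, ← LinearMap.comp_apply, ← TensorProduct.map_comp, ← hGdef, LinearMap.id_comp]
      simp only [LinearMap.add_apply, hGG, TensorProduct.map_id, LinearMap.id_apply]
    rw [hmap, inner_add_right, e3 u]
    have huu : (⟪u, u⟫).re = ‖u‖ ^ 2 := by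
      have := inner_self_eq_norm_sq (𝕜 := ℂ) u
      rwa [RCLike.re_to_complex] at this
    have hψψ : (⟪ψ, ψ⟫).re = 1 := by
      exact (congrArg Complex.re ((inner_self_eq_norm_sq_to_K (𝕜 := ℂ) ψ).trans
        (by rw [hψ1]; simp : ((‖ψ‖ : ℂ)) ^ 2 = 1))).trans Complex.one_re
    simp only [inner_add_right, Complex.add_re, Complex.neg_re, huu, hψψ]
    ring
  rw [hT]
  -- final numerical argument
  have hcc : cConst = 128 * Real.sqrt 2 := rfl
  rw [hcc]
  exact aux_numeric (Real.sqrt 2) ‖u‖ ‖C ψ‖ ((⟪u, w⟫).re) ε (Real.sqrt_nonneg 2)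
    (Real.sq_sqrt (by norm_num)) hε (norm_nonneg u) hb hNsq hruw
end

section
/- Exact intertwining for B0: Let H_B be a finite-dimensional complex inner product space and let B0, B1 be binary observables on H_B. With R := sin(π/8)·X + cos(π/8)·Z, U_B := (R ⊗ I) ∘ control(B1) ∘ (Had ⊗ I) ∘ control(B0) ∘ (Had ⊗ I) ∘ (R† ⊗ I) on ℂ² ⊗ H_B, |aux⟩ := R|0⟩, and V_B(v) := U_B(|aux⟩ ⊗ v), one has the exact operator identity (H ⊗ I) ∘ V_B = V_B ∘ B0, where H := (Z+X)/√2. -/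
set_option maxHeartbeats 1000000
set_option synthInstance.maxHeartbeats 400000
set_option synthInstance.maxSize 2048

open scoped TensorProduct
open Module


section AuxLemmas

lemma ketbra_apply {H : Type*} [NormedAddCommGroup H] [InnerProductSpace ℂ H] (a b v : H) :
    ketbra a b v = (inner ℂ b v : ℂ) • a := rfl

lemma i00 : (inner ℂ ket0 ket0 : ℂ) = 1 := by
  simp [ket0, EuclideanSpace.inner_single_left, EuclideanSpace.single_apply]
lemma i11 : (inner ℂ ket1 ket1 : ℂ) = 1 := by
  simp [ket1, EuclideanSpace.inner_single_left, EuclideanSpace.single_apply]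
lemma i01 : (inner ℂ ket0 ket1 : ℂ) = 0 := by
  simp [ket0, ket1, EuclideanSpace.inner_single_left, EuclideanSpace.single_apply]
lemma i10 : (inner ℂ ket1 ket0 : ℂ) = 0 := by
  simp [ket0, ket1, EuclideanSpace.inner_single_left, EuclideanSpace.single_apply]

lemma pZ0 : pauliZ ket0 = ket0 := by simp [pauliZ, ketbra_apply, ket0, ket1, EuclideanSpace.single_apply, EuclideanSpace.inner_single_left]
lemma pZ1 : pauliZ ket1 = -ket1 := by simp [pauliZ, ketbra_apply, ket0, ket1, EuclideanSpace.single_apply, EuclideanSpace.inner_single_left]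
lemma pX0 : pauliX ket0 = ket1 := by simp [pauliX, ketbra_apply, ket0, ket1, EuclideanSpace.single_apply, EuclideanSpace.inner_single_left]
lemma pX1 : pauliX ket1 = ket0 := by simp [pauliX, ketbra_apply, ket0, ket1, EuclideanSpace.single_apply, EuclideanSpace.inner_single_left]
lemma pr00 : proj0 ket0 = ket0 := by simp [proj0, ketbra_apply, ket0, ket1, EuclideanSpace.single_apply]
lemma pr01 : proj0 ket1 = 0 := by simp [proj0, ketbra_apply, ket0, ket1, EuclideanSpace.single_apply, EuclideanSpace.inner_single_left]
lemma pr10 : proj1 ket0 = 0 := by simp [proj1, ketbra_apply, ket0, ket1, EuclideanSpace.single_apply, EuclideanSpace.inner_single_left]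
lemma pr11 : proj1 ket1 = ket1 := by simp [proj1, ketbra_apply, ket0, ket1, EuclideanSpace.single_apply]

lemma qubit_map_ext {M : Type*} [AddCommGroup M] [Module ℂ M]
    {f g : Qubit →ₗ[ℂ] M} (h0 : f ket0 = g ket0) (h1 : f ket1 = g ket1) : f = g := by
  apply Module.Basis.ext (EuclideanSpace.basisFun (Fin 2) ℂ).toBasis
  intro i
  fin_cases i
  · simpa [OrthonormalBasis.coe_toBasis, EuclideanSpace.basisFun_apply, ket0] using h0
  · simpa [OrthonormalBasis.coe_toBasis, EuclideanSpace.basisFun_apply, ket1] using h1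


lemma trigA : Real.cos (Real.pi/8) + Real.sin (Real.pi/8)
    = Real.sqrt 2 * Real.cos (Real.pi/8) := by
  have hs : Real.sqrt 2 * Real.sqrt 2 = 2 := Real.mul_self_sqrt (by norm_num)
  have h : Real.sin (Real.pi/4 + Real.pi/8) = Real.cos (Real.pi/8) := by
    rw [show Real.pi/4 + Real.pi/8 = Real.pi/2 - Real.pi/8 by ring, Real.sin_pi_div_two_sub]
  rw [Real.sin_add, Real.sin_pi_div_four, Real.cos_pi_div_four] at h
  linear_combination Real.sqrt 2 * h
    - (Real.cos (Real.pi/8) + Real.sin (Real.pi/8))/2 * hs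

lemma trigB : Real.cos (Real.pi/8) - Real.sin (Real.pi/8)
    = Real.sqrt 2 * Real.sin (Real.pi/8) := by
  have hs : Real.sqrt 2 * Real.sqrt 2 = 2 := Real.mul_self_sqrt (by norm_num)
  have h : Real.cos (Real.pi/4 + Real.pi/8) = Real.sin (Real.pi/8) := by
    rw [show Real.pi/4 + Real.pi/8 = Real.pi/2 - Real.pi/8 by ring, Real.cos_pi_div_two_sub]
  rw [Real.cos_add, Real.sin_pi_div_four, Real.cos_pi_div_four] at h
  linear_combination Real.sqrt 2 * h
    - (Real.cos (Real.pi/8) - Real.sin (Real.pi/8))/2 * hs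

lemma sqrt2_ne : ((Real.sqrt 2 : ℝ) : ℂ) ≠ 0 := by
  simp only [ne_eq, Complex.ofReal_eq_zero]
  positivity

lemma rot0 : Rotation ket0 = (Real.cos (Real.pi/8) : ℂ) • ket0
    + (Real.sin (Real.pi/8) : ℂ) • ket1 := by
  simp only [Rotation, LinearMap.add_apply, LinearMap.smul_apply, pZ0, pX0]; abel

lemma rot1 : Rotation ket1 = (Real.sin (Real.pi/8) : ℂ) • ket0
    - (Real.cos (Real.pi/8) : ℂ) • ket1 := by
  simp only [Rotation, LinearMap.add_apply, LinearMap.smul_apply, pZ1, pX1, smul_neg]; abel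

lemma had0 : Hadamard ket0 = ((Real.sqrt 2 : ℂ))⁻¹ • (ket0 + ket1) := by
  simp only [Hadamard, LinearMap.smul_apply, LinearMap.add_apply, pZ0, pX0]

lemma had1 : Hadamard ket1 = ((Real.sqrt 2 : ℂ))⁻¹ • (ket0 - ket1) := by
  simp only [Hadamard, LinearMap.smul_apply, LinearMap.add_apply, pZ1, pX1]; module

lemma rot_rot_aux (c s : ℂ) (h : c^2 + s^2 = 1) (R : Qubit →ₗ[ℂ] Qubit)
    (h0 : R ket0 = c • ket0 + s • ket1) (h1 : R ket1 = s • ket0 - c • ket1) :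
    R ∘ₗ R = LinearMap.id := by
  apply qubit_map_ext <;>
    simp only [LinearMap.comp_apply, LinearMap.id_apply, h0, h1, map_add, map_sub,
      map_smul, smul_add, smul_sub, smul_smul] <;>
    (match_scalars <;> ring_nf) <;>
      first
        | exact h
        | linear_combination h
        | linear_combination -h

lemma rot_rot : Rotation ∘ₗ Rotation = LinearMap.id := by
  refine rot_rot_aux _ _ ?_ _ rot0 rot1
  have h := Real.sin_sq_add_cos_sq (Real.pi/8)
  have h2 : ((Real.sin (Real.pi/8)^2 + Real.cos (Real.pi/8)^2 : ℝ) : ℂ) = ((1:ℝ):ℂ) := by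
    rw [h]
  rw [Complex.ofReal_add, Complex.ofReal_pow, Complex.ofReal_pow, Complex.ofReal_one] at h2
  linear_combination h2

lemma HR_aux (r c s : ℂ) (hr : r ≠ 0) (tA : c + s = r * c) (tB : c - s = r * s)
    (R Hd : Qubit →ₗ[ℂ] Qubit)
    (h0 : R ket0 = c • ket0 + s • ket1) (h1 : R ket1 = s • ket0 - c • ket1)
    (hH0 : Hd ket0 = r⁻¹ • (ket0 + ket1)) (hH1 : Hd ket1 = r⁻¹ • (ket0 - ket1)) :
    Hd ∘ₗ R = R ∘ₗ pauliZ := by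
  apply qubit_map_ext <;>
    simp only [LinearMap.comp_apply, pZ0, pZ1, h0, h1, map_add, map_sub, map_smul,
      map_neg, hH0, hH1, smul_add, smul_sub, smul_smul, smul_neg, neg_add, neg_sub] <;>
    (match_scalars <;> ring_nf) <;>
      (field_simp <;>
      first
        | linear_combination tA
        | linear_combination tB
        | linear_combination -tA
        | linear_combination -tB
        | linear_combination tA + tB
        | linear_combination tA - tB
        | linear_combination -tA + tB
        | linear_combination -tA - tB
        | ring1)

lemma HR_eq_RZ : Hadamard ∘ₗ Rotation = Rotation ∘ₗ pauliZ := by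
  have tA : ((Real.cos (Real.pi/8) : ℝ) : ℂ) + ((Real.sin (Real.pi/8) : ℝ) : ℂ)
      = ((Real.sqrt 2 : ℝ) : ℂ) * ((Real.cos (Real.pi/8) : ℝ) : ℂ) := by
    have := congrArg (Complex.ofReal) trigA
    rw [Complex.ofReal_add, Complex.ofReal_mul] at this
    linear_combination this
  have tB : ((Real.cos (Real.pi/8) : ℝ) : ℂ) - ((Real.sin (Real.pi/8) : ℝ) : ℂ)
      = ((Real.sqrt 2 : ℝ) : ℂ) * ((Real.sin (Real.pi/8) : ℝ) : ℂ) := by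
    have := congrArg (Complex.ofReal) trigB
    rw [Complex.ofReal_sub, Complex.ofReal_mul] at this
    linear_combination this
  exact HR_aux _ _ _ sqrt2_ne tA tB _ _ rot0 rot1 had0 had1


lemma ketbra_sym_pair (a b x y : Qubit) :
    (inner ℂ ((ketbra a b) x) y : ℂ) = inner ℂ x ((ketbra b a) y) := by
  simp only [ketbra_apply, inner_smul_left, inner_smul_right, inner_conj_symm]
  ring

lemma rot_adj : LinearMap.adjoint Rotation = Rotation := by
  refine ((LinearMap.eq_adjoint_iff Rotation Rotation).mpr ?_).symm
  intro x y
  simp only [Rotation, pauliX, pauliZ, LinearMap.add_apply, LinearMap.sub_apply,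
    LinearMap.smul_apply, inner_add_left, inner_add_right, inner_sub_left, inner_sub_right,
    inner_smul_left, inner_smul_right, Complex.conj_ofReal, ketbra_sym_pair]
  ring

variable {H : Type*} [NormedAddCommGroup H] [InnerProductSpace ℂ H] [FiniteDimensional ℂ H]

lemma control_ket0 (A : H →ₗ[ℂ] H) (y : H) :
    controlGate A (ket0 ⊗ₜ[ℂ] y) = ket0 ⊗ₜ[ℂ] y := by
  simp [controlGate, pr00, pr10]

lemma control_ket1 (A : H →ₗ[ℂ] H) (y : H) :
    controlGate A (ket1 ⊗ₜ[ℂ] y) = ket1 ⊗ₜ[ℂ] (A y) := by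
  simp [controlGate, pr01, pr11]

lemma inv_sqrt2_sq : ((Real.sqrt 2 : ℂ))⁻¹ * ((Real.sqrt 2 : ℂ))⁻¹ = (2:ℂ)⁻¹ := by
  have h : ((Real.sqrt 2 * Real.sqrt 2 : ℝ) : ℂ) = (2:ℂ) := by
    rw [Real.mul_self_sqrt (by norm_num)]
    norm_num
  rw [← mul_inv, ← Complex.ofReal_mul, h]

lemma UA_ket0 (B0 B1 : H →ₗ[ℂ] H) (v : H) :
    unitaryUA B0 B1 (ket0 ⊗ₜ[ℂ] v)
      = (2:ℂ)⁻¹ • (ket0 ⊗ₜ[ℂ] (v + B0 v) + ket1 ⊗ₜ[ℂ] (B1 v - B1 (B0 v))) := by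
  have h2 := inv_sqrt2_sq
  simp only [unitaryUA, LinearMap.comp_apply, TensorProduct.map_tmul, LinearMap.id_coe,
    id_eq, had0, had1, ← TensorProduct.smul_tmul', TensorProduct.add_tmul,
    TensorProduct.sub_tmul, map_add, map_sub, map_smul, control_ket0, control_ket1,
    TensorProduct.tmul_add, TensorProduct.tmul_sub, smul_add, smul_sub, smul_smul, h2]
  module

lemma mapHR_comm :
    (TensorProduct.map Hadamard (LinearMap.id : H →ₗ[ℂ] H)) ∘ₗ
        TensorProduct.map Rotation LinearMap.id
      = (TensorProduct.map Rotation LinearMap.id) ∘ₗ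
        TensorProduct.map pauliZ LinearMap.id := by
  rw [← TensorProduct.map_comp, ← TensorProduct.map_comp, HR_eq_RZ]

lemma VB_apply (B0 B1 : H →ₗ[ℂ] H) (v : H) :
    VB B0 B1 v = (TensorProduct.map Rotation LinearMap.id)
      ((2:ℂ)⁻¹ • (ket0 ⊗ₜ[ℂ] (v + B0 v) + ket1 ⊗ₜ[ℂ] (B1 v - B1 (B0 v)))) := by
  have hR : (LinearMap.adjoint Rotation) (Rotation ket0) = ket0 := by
    rw [rot_adj, ← LinearMap.comp_apply, rot_rot, LinearMap.id_apply]
  simp only [VB, unitaryUB, LinearMap.comp_apply, embed, auxState, TensorProduct.mk_apply,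
    TensorProduct.map_tmul, LinearMap.id_coe, id_eq, hR, UA_ket0]

end AuxLemmas

/-- **Exact intertwining for `B0`:** `(H ⊗ I) ∘ V_B = V_B ∘ B0`. -/
theorem B0_exact_intertwine
    {H_B : Type*} [NormedAddCommGroup H_B] [InnerProductSpace ℂ H_B]
    [FiniteDimensional ℂ H_B]
    (B0 B1 : H_B →ₗ[ℂ] H_B)
    (hB0 : IsBinaryObservable B0) (hB1 : IsBinaryObservable B1) :
    (TensorProduct.map Hadamard (LinearMap.id : H_B →ₗ[ℂ] H_B)) ∘ₗ VB B0 B1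
      = VB B0 B1 ∘ₗ B0 := by
  have hB0sq : ∀ v, B0 (B0 v) = v := by
    intro v
    have := congrArg (fun f => f v) hB0.sq_one
    simpa using this
  apply LinearMap.ext
  intro v
  simp only [LinearMap.comp_apply, VB_apply]
  rw [← LinearMap.comp_apply (TensorProduct.map Hadamard LinearMap.id), mapHR_comm,
    LinearMap.comp_apply]
  congr 1
  simp only [map_smul, map_add, map_sub, TensorProduct.map_tmul, LinearMap.id_coe, id_eq,
    pZ0, pZ1, hB0sq, TensorProduct.tmul_add, TensorProduct.tmul_sub,
    TensorProduct.neg_tmul, smul_add, smul_sub, smul_neg]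
  module
end
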